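/- arXiv:1603.07699 — 5 statements merged into one kernel-verified Lean document; each statement's English description precedes it below -/
import Mathlib

section
/- A 1-Lipschitz function f : ℤ_p → ℤ_p preserves the Haar measure if and only if for every k ≥ 1, the induced map f_k : ℤ/p^kℤ → ℤ/p^kℤ, given by reduction of f modulo p^k, is a bijection. -/
open MeasureTheory
open ENNReal

variable (p : ℕ) [Fact p.Prime]

noncomputable instance : MeasurableSpace ℤ_[p] := borel _
instance : BorelSpace ℤ_[p] := ⟨rfl⟩

/-- The normalized Haar measure on `ℤ_[p]` (total mass 1). -/
noncomputable def haarZp : Measure ℤ_[p] := Measure.addHaarMeasure ⊤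

namespace Stmt2Aux

variable {p}

/-- The coset of `p^k ℤ_p` indexed by `a : ZMod (p^k)`. -/
def C (k : ℕ) (a : ZMod (p ^ k)) : Set ℤ_[p] := (PadicInt.toZModPow k) ⁻¹' {a}

lemma mem_C {k : ℕ} {a : ZMod (p ^ k)} {x : ℤ_[p]} :
    x ∈ C k a ↔ PadicInt.toZModPow k x = a := Iff.rfl

lemma toZModPow_eq_iff (k : ℕ) (x y : ℤ_[p]) :
    PadicInt.toZModPow k x = PadicInt.toZModPow k y ↔ ‖x - y‖ ≤ (p : ℝ) ^ (-(k : ℤ)) := by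
  rw [PadicInt.norm_le_pow_iff_mem_span_pow, ← PadicInt.ker_toZModPow, RingHom.mem_ker,
    map_sub, sub_eq_zero]

lemma isOpen_C (k : ℕ) (a : ZMod (p ^ k)) : IsOpen (C (p := p) k a) := by
  rw [Metric.isOpen_iff]
  intro x hx
  refine ⟨(p : ℝ) ^ (-(k : ℤ)),
    zpow_pos (by exact_mod_cast (Fact.out : p.Prime).pos) _, fun y hy => ?_⟩
  rw [Metric.mem_ball, dist_eq_norm] at hy
  rw [mem_C, ← hx, toZModPow_eq_iff]
  exact hy.le

lemma measurableSet_C (k : ℕ) (a : ZMod (p ^ k)) : MeasurableSet (C (p := p) k a) :=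
  (isOpen_C k a).measurableSet

lemma disjoint_C (k : ℕ) {a b : ZMod (p ^ k)} (hab : a ≠ b) :
    Disjoint (C (p := p) k a) (C k b) := by
  refine Set.disjoint_left.2 fun x hx hx' => hab ?_
  rw [mem_C] at hx hx'; rw [← hx, hx']

lemma iUnion_C (k : ℕ) : ⋃ a : ZMod (p ^ k), C (p := p) k a = Set.univ := by
  ext x; simp [C]

instance neZero_ppow (k : ℕ) : NeZero (p ^ k) :=
  ⟨pow_ne_zero k (Fact.out : p.Prime).pos.ne'⟩

lemma toZModPow_natCast_val (k : ℕ) (z : ZMod (p ^ k)) :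
    PadicInt.toZModPow k ((z.val : ℕ) : ℤ_[p]) = z := by
  rw [map_natCast, ZMod.natCast_zmod_val]

lemma haarZp_univ : haarZp p Set.univ = 1 := by
  have : ((⊤ : TopologicalSpace.PositiveCompacts ℤ_[p]) : Set ℤ_[p]) = Set.univ :=
    TopologicalSpace.PositiveCompacts.coe_top
  rw [haarZp, ← this, Measure.addHaarMeasure_self]

instance : IsFiniteMeasure (haarZp p) :=
  ⟨by rw [haarZp_univ]; exact ENNReal.one_lt_top⟩

instance : (haarZp p).IsAddLeftInvariant := by
  unfold haarZp; infer_instance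

lemma haarZp_C_eq (k : ℕ) (a b : ZMod (p ^ k)) :
    haarZp p (C k a) = haarZp p (C k b) := by
  set d : ℤ_[p] := (((b - a).val : ℕ) : ℤ_[p]) with hd
  have key : (fun x => d + x) ⁻¹' (C k b) = C (p := p) k a := by
    ext x
    simp only [Set.mem_preimage, mem_C, map_add, toZModPow_natCast_val, hd]
    constructor
    · intro h; have := congrArg (· - (b - a)) h; simpa using this
    · intro h; rw [h]; ring
  rw [← key, measure_preimage_add]

lemma ppow_ne_zero (k : ℕ) : ((p : ℝ≥0∞) ^ k) ≠ 0 :=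
  pow_ne_zero k (by exact_mod_cast (Fact.out : p.Prime).pos.ne')

lemma ppow_ne_top (k : ℕ) : ((p : ℝ≥0∞) ^ k) ≠ ⊤ :=
  pow_ne_top (natCast_ne_top p)

lemma haarZp_C (k : ℕ) (a : ZMod (p ^ k)) :
    haarZp p (C k a) = ((p : ℝ≥0∞) ^ k)⁻¹ := by
  have hsum : ∑ b : ZMod (p ^ k), haarZp p (C k b) = 1 := by
    rw [← tsum_fintype (L := SummationFilter.unconditional _), ← measure_iUnion (fun i j hij => disjoint_C k hij)
      (fun b => measurableSet_C k b), iUnion_C, haarZp_univ]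
  have hconst : ∀ b, haarZp p (C k b) = haarZp p (C k a) := fun b => haarZp_C_eq k b a
  rw [Finset.sum_congr rfl (fun b _ => hconst b), Finset.sum_const, Finset.card_univ,
    ZMod.card, nsmul_eq_mul] at hsum
  have h2 : haarZp p (C k a) * ((p : ℝ≥0∞) ^ k) = 1 := by
    rw [mul_comm, ← hsum]; push_cast; ring
  exact ENNReal.eq_inv_of_mul_eq_one_left h2

end Stmt2Aux

namespace Stmt2Aux
variable {p}

/-- The induced map on `ZMod (p^k)`. -/
noncomputable def g (f : ℤ_[p] → ℤ_[p]) (k : ℕ) : ZMod (p ^ k) → ZMod (p ^ k) :=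
  fun z => PadicInt.toZModPow k (f ((z.val : ℕ) : ℤ_[p]))

variable {f : ℤ_[p] → ℤ_[p]} (hlip : ∀ x y : ℤ_[p], ‖f x - f y‖ ≤ ‖x - y‖)

include hlip in
lemma toZModPow_f (k : ℕ) (x : ℤ_[p]) :
    PadicInt.toZModPow k (f x) = g f k (PadicInt.toZModPow k x) := by
  have h1 : PadicInt.toZModPow k x
      = PadicInt.toZModPow k ((((PadicInt.toZModPow k x).val : ℕ)) : ℤ_[p]) :=
    (toZModPow_natCast_val k _).symm
  rw [toZModPow_eq_iff] at h1
  unfold g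
  rw [toZModPow_eq_iff]
  exact le_trans (hlip _ _) h1

/-- fiber of the induced map as a finset -/
noncomputable def fib (f : ℤ_[p] → ℤ_[p]) (k : ℕ) (a : ZMod (p ^ k)) : Finset (ZMod (p ^ k)) :=
  Finset.univ.filter fun z => g f k z = a

include hlip in
lemma preimage_C (k : ℕ) (a : ZMod (p ^ k)) :
    f ⁻¹' C k a = ⋃ z ∈ fib f k a, C k z := by
  ext x
  simp only [Set.mem_preimage, mem_C, toZModPow_f hlip, Set.mem_iUnion, fib,
    Finset.mem_filter, Finset.mem_univ, true_and]
  constructor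
  · intro h; exact ⟨_, h, rfl⟩
  · rintro ⟨z, hz, hx⟩; rw [hx]; exact hz

include hlip in
lemma measure_preimage_C (k : ℕ) (a : ZMod (p ^ k)) :
    haarZp p (f ⁻¹' C k a) = (fib f k a).card * ((p : ℝ≥0∞) ^ k)⁻¹ := by
  rw [preimage_C hlip, measure_biUnion_finset
    (fun i _ j _ hij => disjoint_C k hij) (fun b _ => measurableSet_C k b)]
  simp [haarZp_C, Finset.sum_const, nsmul_eq_mul]

lemma card_fib_of_bijective (k : ℕ) (hb : Function.Bijective (g f k)) (a : ZMod (p ^ k)) :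
    (fib f k a).card = 1 := by
  have : fib f k a = {(Equiv.ofBijective _ hb).symm a} := by
    ext z
    simp only [fib, Finset.mem_filter, Finset.mem_univ, true_and, Finset.mem_singleton]
    constructor
    · intro h
      have := congrArg (Equiv.ofBijective _ hb).symm h
      simpa using this
    · rintro rfl; exact (Equiv.ofBijective _ hb).apply_symm_apply a
  rw [this, Finset.card_singleton]

lemma bijective_of_card_fib (k : ℕ) (h : ∀ a : ZMod (p ^ k), (fib f k a).card = 1) :
    Function.Bijective (g f k) := by
  rw [Function.bijective_iff_existsUnique]
  intro b
  obtain ⟨z, hz⟩ := Finset.card_eq_one.1 (h b)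
  refine ⟨z, ?_, fun y hy => ?_⟩
  · have : z ∈ fib f k b := hz ▸ Finset.mem_singleton_self z
    simpa [fib] using this
  · have : y ∈ fib f k b := by simp [fib, hy]
    rw [hz] at this; simpa using this

end Stmt2Aux

namespace Stmt2Aux
variable {p}

/-- The collection of all cosets. -/
def S : Set (Set ℤ_[p]) := {s | ∃ k : ℕ, ∃ a : ZMod (p ^ k), s = C k a}

lemma one_le_p : (1 : ℝ) ≤ (p : ℝ) := by
  exact_mod_cast (Fact.out : p.Prime).one_lt.le

lemma inter_C {k l : ℕ} (hkl : k ≤ l) (a : ZMod (p ^ k)) (b : ZMod (p ^ l))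
    (hne : (C (p := p) k a ∩ C l b).Nonempty) : C (p := p) k a ∩ C l b = C l b := by
  obtain ⟨y, hya, hyb⟩ := hne
  refine Set.inter_eq_right.2 fun x hx => ?_
  rw [mem_C] at hx hya hyb ⊢
  rw [← hya, toZModPow_eq_iff]
  have h1 : ‖x - y‖ ≤ (p : ℝ) ^ (-(l : ℤ)) := (toZModPow_eq_iff l x y).1 (by rw [hx, hyb])
  refine h1.trans (zpow_le_zpow_right₀ one_le_p ?_)
  omega

lemma isPiSystem_S : IsPiSystem (S (p := p)) := by
  rintro s ⟨k, a, rfl⟩ t ⟨l, b, rfl⟩ hne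
  rcases le_total k l with h | h
  · rw [inter_C h a b hne]; exact ⟨l, b, rfl⟩
  · rw [Set.inter_comm] at hne ⊢
    rw [inter_C h b a hne]; exact ⟨k, a, rfl⟩

lemma isBasis : TopologicalSpace.IsTopologicalBasis (S (p := p)) := by
  apply TopologicalSpace.isTopologicalBasis_of_isOpen_of_nhds
  · rintro u ⟨k, a, rfl⟩; exact isOpen_C k a
  · intro x u hxu hu
    obtain ⟨ε, hε, hball⟩ := Metric.isOpen_iff.1 hu x hxu
    obtain ⟨k, hk⟩ := PadicInt.exists_pow_neg_lt p hε
    refine ⟨C k (PadicInt.toZModPow k x), ⟨k, _, rfl⟩, rfl, fun y hy => hball ?_⟩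
    rw [mem_C] at hy
    rw [Metric.mem_ball, dist_eq_norm]
    exact lt_of_le_of_lt ((toZModPow_eq_iff k y x).1 hy) hk

end Stmt2Aux

open Stmt2Aux in
theorem stmt_2 (f : ℤ_[p] → ℤ_[p])
    (hlip : ∀ x y : ℤ_[p], ‖f x - f y‖ ≤ ‖x - y‖) :
    MeasurePreserving f (haarZp p) (haarZp p) ↔
      ∀ k : ℕ, 1 ≤ k →
        Function.Bijective
          (fun z : ZMod (p ^ k) => PadicInt.toZModPow k (f ((z.val : ℕ) : ℤ_[p]))) := by
  have hlw : LipschitzWith 1 f := LipschitzWith.of_dist_le_mul fun x y => by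
    rw [dist_eq_norm, dist_eq_norm]
    simpa using hlip x y
  have hm : Measurable f := hlw.continuous.measurable
  constructor
  · intro h k hk
    apply bijective_of_card_fib k
    intro a
    have h1 : haarZp p (f ⁻¹' C k a) = haarZp p (C k a) :=
      h.measure_preimage (measurableSet_C k a).nullMeasurableSet
    rw [measure_preimage_C hlip, haarZp_C] at h1
    have hinv : ((p : ℝ≥0∞) ^ k)⁻¹ * ((p : ℝ≥0∞) ^ k) = 1 :=
      ENNReal.inv_mul_cancel (ppow_ne_zero k) (ppow_ne_top k)
    have h2 : (((fib f k a).card : ℕ) : ℝ≥0∞) = 1 := by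
      calc (((fib f k a).card : ℕ) : ℝ≥0∞)
          = ((fib f k a).card : ℝ≥0∞) * (((p : ℝ≥0∞) ^ k)⁻¹ * ((p : ℝ≥0∞) ^ k)) := by
            rw [hinv, mul_one]
        _ = ((fib f k a).card * ((p : ℝ≥0∞) ^ k)⁻¹) * ((p : ℝ≥0∞) ^ k) := by ring
        _ = ((p : ℝ≥0∞) ^ k)⁻¹ * ((p : ℝ≥0∞) ^ k) := by rw [h1]
        _ = 1 := hinv
    exact_mod_cast h2
  · intro hb
    refine ⟨hm, ?_⟩
    haveI : IsFiniteMeasure (Measure.map f (haarZp p)) := ⟨by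
      rw [Measure.map_apply hm MeasurableSet.univ, Set.preimage_univ, haarZp_univ]
      exact ENNReal.one_lt_top⟩
    refine ext_of_generate_finite (S (p := p))
      ((BorelSpace.measurable_eq (α := ℤ_[p])).trans isBasis.borel_eq_generateFrom)
      isPiSystem_S ?_ ?_
    · rintro s ⟨k, a, rfl⟩
      have hcard : (fib f k a).card = 1 := by
        rcases Nat.eq_zero_or_pos k with rfl | hk
        · haveI : Subsingleton (ZMod (p ^ 0)) := by rw [pow_zero]; infer_instance
          have : fib f 0 a = Finset.univ :=
            Finset.eq_univ_iff_forall.2 fun z =>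
              Finset.mem_filter.2 ⟨Finset.mem_univ z, Subsingleton.elim _ _⟩
          rw [this, Finset.card_univ, ZMod.card, pow_zero]
        · exact card_fib_of_bijective k (hb k hk) a
      rw [Measure.map_apply hm (measurableSet_C k a), measure_preimage_C hlip, hcard,
        haarZp_C, Nat.cast_one, one_mul]
    · rw [Measure.map_apply hm MeasurableSet.univ, Set.preimage_univ]
end

section
/- If a 1-Lipschitz function f : ℤ_p → ℤ_p preserves the Haar measure, then f is a bijection on ℤ_p. -/
open MeasureTheory

variable (p : ℕ) [Fact p.Prime]

theorem stmt_3 (f : ℤ_[p] → ℤ_[p])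
    (hlip : ∀ x y : ℤ_[p], ‖f x - f y‖ ≤ ‖x - y‖)
    (hmp : MeasurePreserving f (haarZp p) (haarZp p)) :
    Function.Bijective f := by
  have hp1 : (1 : ℝ) < (p : ℝ) := by
    exact_mod_cast (Fact.out : p.Prime).one_lt
  haveI : (haarZp p).IsAddHaarMeasure :=
    Measure.isAddHaarMeasure_addHaarMeasure ⊤
  haveI : IsFiniteMeasure (haarZp p) := by
    constructor
    have : (haarZp p) Set.univ = 1 := by
      have := Measure.addHaarMeasure_self (K₀ := (⊤ : TopologicalSpace.PositiveCompacts ℤ_[p]))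
      simpa [haarZp] using this
    rw [this]; exact ENNReal.one_lt_top
  have hμuniv : (haarZp p) Set.univ = 1 := by
    have := Measure.addHaarMeasure_self (K₀ := (⊤ : TopologicalSpace.PositiveCompacts ℤ_[p]))
    simpa [haarZp] using this
  -- translation invariance: measure of closed balls independent of center
  have hball : ∀ (x : ℤ_[p]) (r : ℝ),
      (haarZp p) (Metric.closedBall x r) = (haarZp p) (Metric.closedBall 0 r) := by
    intro x r
    have : Metric.closedBall x r = (fun z => -x + z) ⁻¹' (Metric.closedBall 0 r) := by
      ext z
      simp [Metric.mem_closedBall, dist_eq_norm, neg_add_eq_sub]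
    rw [this, measure_preimage_add]
  have hcont : Continuous f := by
    apply LipschitzWith.continuous (K := 1)
    intro x y
    rw [edist_dist, edist_dist, dist_eq_norm, dist_eq_norm]
    simpa using ENNReal.ofReal_le_ofReal (hlip x y)
  constructor
  · -- injective
    intro a b hab
    by_contra hne
    have hsub : a - b ≠ 0 := sub_ne_zero.mpr hne
    set k : ℤ := ((a - b).valuation : ℤ) with hk
    have hnorm : ‖a - b‖ = (p : ℝ) ^ (-k) := PadicInt.norm_eq_zpow_neg_valuation hsub
    set r : ℝ := (p : ℝ) ^ (-(k + 1)) with hr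
    have hrpos : 0 < r := zpow_pos (by linarith) _
    have hrlt : r < ‖a - b‖ := by
      rw [hnorm, hr]
      exact zpow_lt_zpow_right₀ hp1 (by omega)
    -- the two balls
    set Ba := Metric.closedBall a r
    set Bb := Metric.closedBall b r
    have hdisj : Disjoint Ba Bb := by
      rw [Set.disjoint_left]
      intro z hza hzb
      have h1 : ‖a - z‖ ≤ r := by
        simpa [dist_eq_norm, norm_sub_rev] using Metric.mem_closedBall.mp hza
      have h2 : ‖z - b‖ ≤ r := by
        simpa [dist_eq_norm] using Metric.mem_closedBall.mp hzb
      have : ‖a - b‖ ≤ max ‖a - z‖ ‖z - b‖ := by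
        have := IsUltrametricDist.norm_add_le_max (a - z) (z - b)
        simpa using this
      have : ‖a - b‖ ≤ r := this.trans (max_le h1 h2)
      linarith
    have hmeas : ∀ c : ℤ_[p], MeasurableSet (Metric.closedBall c r) :=
      fun c => Metric.isClosed_closedBall.measurableSet
    have hopen : IsOpen (Metric.closedBall (0 : ℤ_[p]) r) :=
      IsUltrametricDist.isOpen_closedBall _ hrpos.ne'
    have hcpos : 0 < (haarZp p) (Metric.closedBall 0 r) :=
      hopen.measure_pos _ ⟨0, Metric.mem_closedBall_self hrpos.le⟩
    have hcfin : (haarZp p) (Metric.closedBall 0 r) < ⊤ := measure_lt_top _ _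
    -- both balls map into closedBall (f a) r
    have hsubset : Ba ∪ Bb ⊆ f ⁻¹' (Metric.closedBall (f a) r) := by
      rintro z (hz | hz)
      · have : ‖z - a‖ ≤ r := by simpa [dist_eq_norm] using Metric.mem_closedBall.mp hz
        exact Metric.mem_closedBall.mpr (by simpa [dist_eq_norm] using (hlip z a).trans this)
      · have : ‖z - b‖ ≤ r := by simpa [dist_eq_norm] using Metric.mem_closedBall.mp hz
        have := (hlip z b).trans this
        rw [← hab] at this
        exact Metric.mem_closedBall.mpr (by simpa [dist_eq_norm] using this)
    have hpre : (haarZp p) (f ⁻¹' (Metric.closedBall (f a) r))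
        = (haarZp p) (Metric.closedBall 0 r) := by
      rw [hmp.measure_preimage (hmeas (f a)).nullMeasurableSet, hball]
    have hunion : (haarZp p) (Ba ∪ Bb)
        = (haarZp p) (Metric.closedBall 0 r) + (haarZp p) (Metric.closedBall 0 r) := by
      rw [measure_union hdisj (hmeas b), hball a r, hball b r]
    have hle : (haarZp p) (Ba ∪ Bb) ≤ (haarZp p) (Metric.closedBall 0 r) := by
      rw [← hpre]; exact measure_mono hsubset
    rw [hunion] at hle
    have := ENNReal.lt_add_right hcfin.ne hcpos.ne'
    exact absurd hle (by simpa using this.not_ge)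
  · -- surjective
    have hK : IsCompact (Set.range f) := isCompact_range hcont
    have hKm : MeasurableSet (Set.range f) := hK.isClosed.measurableSet
    have h1 : (haarZp p) (Set.range f) = 1 := by
      rw [← hmp.measure_preimage hKm.nullMeasurableSet]
      have : f ⁻¹' (Set.range f) = Set.univ := by
        ext z; simp [Set.mem_range]
      rw [this, hμuniv]
    have hcompl : (haarZp p) (Set.range f)ᶜ = 0 := by
      rw [measure_compl hKm (measure_lt_top _ _).ne, hμuniv, h1, tsub_self]
    have : (Set.range f)ᶜ = ∅ := by
      by_contra h
      obtain ⟨z, hz⟩ := Set.nonempty_iff_ne_empty.mpr h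
      have := hK.isClosed.isOpen_compl.measure_pos (haarZp p) ⟨z, hz⟩
      rw [hcompl] at this; exact lt_irrefl _ this
    intro y
    have : y ∈ Set.range f := by
      by_contra hy
      exact absurd (Set.mem_compl hy) (by rw [this]; exact id)
    exact this
end

section
/- Let f : ℤ_p → ℤ_p be multiplicative (f(x·y) = f(x)·f(y) for all x, y), 1-Lipschitz, and not identically 0 nor identically 1. Then f(0) = 0, f(1) = 1, and there exists s ∈ {0,1,...,p-2} such that f(z) ≡ z^s (mod p) for all z ∈ ℤ_p with |z|_p = 1. -/
theorem stmt_4 (p : ℕ) [Fact p.Prime] (f : ℤ_[p] → ℤ_[p])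
    (hlip : ∀ x y : ℤ_[p], ‖f x - f y‖ ≤ ‖x - y‖)
    (hmul : ∀ x y : ℤ_[p], f (x * y) = f x * f y)
    (hne0 : ∃ x : ℤ_[p], f x ≠ 0) (hne1 : ∃ x : ℤ_[p], f x ≠ 1) :
    f 0 = 0 ∧ f 1 = 1 ∧
      ∃ s : ℕ, s ≤ p - 2 ∧
        ∀ z : ℤ_[p], ‖z‖ = 1 → PadicInt.toZMod (f z) = (PadicInt.toZMod z) ^ s := by
  have hp : p.Prime := Fact.out
  -- f 0 = 0
  have hf0 : f 0 = 0 := by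
    have h00 : f 0 * (f 0 - 1) = 0 := by
      have := (hmul 0 0).symm; rw [mul_zero] at this; linear_combination this
    rcases mul_eq_zero.mp h00 with h | h
    · exact h
    · exfalso
      obtain ⟨x, hx⟩ := hne1
      apply hx
      have h1 : f 0 = 1 := sub_eq_zero.mp h
      have := hmul x 0
      rw [mul_zero, h1, mul_one] at this
      exact this.symm
  -- f 1 = 1
  have hf1 : f 1 = 1 := by
    have h11 : f 1 * (f 1 - 1) = 0 := by
      have := (hmul 1 1).symm; rw [mul_one] at this; linear_combination this
    rcases mul_eq_zero.mp h11 with h | h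
    · exfalso
      obtain ⟨x, hx⟩ := hne0
      apply hx
      have := hmul x 1
      rw [mul_one, h, mul_zero] at this
      exact this
    · exact sub_eq_zero.mp h
  refine ⟨hf0, hf1, ?_⟩
  -- key congruence: toZMod z = toZMod w → toZMod (f z) = toZMod (f w)
  have hker : ∀ z : ℤ_[p], PadicInt.toZMod z = 0 ↔ ‖z‖ < 1 := by
    intro z
    rw [← RingHom.mem_ker, PadicInt.ker_toZMod, PadicInt.maximalIdeal_eq_span_p,
      Ideal.mem_span_singleton, ← PadicInt.norm_lt_one_iff_dvd]
  have hcongr : ∀ z w : ℤ_[p], PadicInt.toZMod z = PadicInt.toZMod w →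
      PadicInt.toZMod (f z) = PadicInt.toZMod (f w) := by
    intro z w h
    rw [← sub_eq_zero, ← map_sub, hker]
    have h1 : ‖z - w‖ < 1 := by
      rw [← hker, map_sub, sub_eq_zero]; exact h
    exact lt_of_le_of_lt (hlip z w) h1
  -- the induced map g on ZMod p
  set g : ZMod p → ZMod p := fun a => PadicInt.toZMod (f ((a.val : ℤ_[p]))) with hg
  have hrep : ∀ a : ZMod p, PadicInt.toZMod ((a.val : ℤ_[p])) = a := by
    intro a
    rw [map_natCast, ZMod.natCast_val, ZMod.cast_id]
  have key : ∀ z : ℤ_[p], PadicInt.toZMod (f z) = g (PadicInt.toZMod z) := by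
    intro z
    exact hcongr z _ (by rw [hrep])
  have gmul : ∀ a b : ZMod p, g (a * b) = g a * g b := by
    intro a b
    have h1 : PadicInt.toZMod (f ((a.val : ℤ_[p]) * (b.val : ℤ_[p]))) = g (a * b) := by
      rw [key, map_mul, hrep, hrep]
    rw [← h1, hmul, map_mul]
  have g1 : g 1 = 1 := by
    have := key 1
    rw [hf1, map_one] at this
    exact this.symm
  have gpow : ∀ (a : ZMod p) (n : ℕ), g (a ^ n) = g a ^ n := by
    intro a n
    induction n with
    | zero => simpa using g1
    | succ n ih => rw [pow_succ, pow_succ, gmul, ih]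
  -- g maps units to units
  have gunit : ∀ u : (ZMod p)ˣ, g (↑u) ≠ 0 := by
    intro u h
    have h1 : g ((↑u : ZMod p) ^ (p - 1)) = 1 := by
      rw [ZMod.pow_card_sub_one_eq_one u.ne_zero, g1]
    rw [gpow, h] at h1
    have hp1 : p - 1 ≠ 0 := by have := hp.two_le; omega
    rw [zero_pow hp1] at h1
    exact zero_ne_one h1
  -- generator of the unit group
  obtain ⟨γ, hγ⟩ := IsCyclic.exists_generator (α := (ZMod p)ˣ)
  have hmem : ∀ u : (ZMod p)ˣ, ∃ k : ℕ, γ ^ k = u := by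
    intro u
    have := hγ u
    rwa [← mem_powers_iff_mem_zpowers, Submonoid.mem_powers_iff] at this
  have hord : orderOf γ = p - 1 := by
    rw [orderOf_eq_card_of_forall_mem_zpowers hγ, Nat.card_eq_fintype_card,
      ZMod.card_units_eq_totient, Nat.totient_prime hp]
  -- g γ is a power of γ
  obtain ⟨v, hv⟩ := (isUnit_iff_ne_zero.mpr (gunit γ))
  obtain ⟨k0, hk0⟩ := hmem v
  refine ⟨k0 % (p - 1), ?_, ?_⟩
  · have : k0 % (p - 1) < p - 1 := Nat.mod_lt _ (by have := hp.two_le; omega)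
    omega
  · intro z hz
    set s := k0 % (p - 1) with hs
    have hγs : γ ^ s = γ ^ k0 := by rw [hs, ← hord, pow_mod_orderOf]
    have hzu : PadicInt.toZMod z ≠ 0 := by
      intro h
      rw [hker] at h
      linarith [hz ▸ h]
    obtain ⟨u, hu⟩ := isUnit_iff_ne_zero.mpr hzu
    obtain ⟨k, hk⟩ := hmem u
    have : g (↑u) = ↑(u ^ s) := by
      calc g (↑u) = g ((↑γ : ZMod p) ^ k) := by rw [← hk]; norm_cast
        _ = g (↑γ) ^ k := gpow _ _
        _ = (↑v : ZMod p) ^ k := by rw [hv]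
        _ = ↑((γ ^ k0) ^ k) := by rw [hk0]; norm_cast
        _ = ↑((γ ^ k) ^ s) := by rw [← hγs, ← pow_mul, ← pow_mul, Nat.mul_comm]
        _ = ↑(u ^ s) := by rw [hk]
    rw [key, ← hu, this]
    norm_cast
end

section
/- Let f : ℤ_p → ℤ_p be a 1-Lipschitz function whose coordinate functions are φ_k, i.e., the k-th digit of f(x) equals φ_k(x_0,...,x_k) where x_i are the digits of x. Then f(x XOR y) = f(x) XOR f(y) for all x, y if and only if each φ_k is ℤ/pℤ-linear: φ_k(x_0,...,x_k) = α_0^{(k)} x_0 + α_1^{(k)} x_1 + ... + α_k^{(k)} x_k (mod p) for some coefficients α_i^{(k)} ∈ {0,...,p-1}. -/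
variable (p : ℕ) [Fact p.Prime]

/-- The k-th digit of the canonical p-adic expansion of `x`. -/
noncomputable def digit (x : ℤ_[p]) (k : ℕ) : ℕ := x.appr (k + 1) / p ^ k

/-- Digit-wise addition modulo `p` on `ℤ_[p]`. -/
noncomputable def pXOR (x y : ℤ_[p]) : ℤ_[p] :=
  ∑' k : ℕ, (((digit p x k + digit p y k) % p : ℕ) : ℤ_[p]) * (p : ℤ_[p]) ^ k

lemma digit_lt (x : ℤ_[p]) (k : ℕ) : digit p x k < p := by
  have h := x.appr_lt (k + 1)
  have hp : 0 < p ^ k := pow_pos (Fact.out : p.Prime).pos k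
  rw [digit, Nat.div_lt_iff_lt_mul hp]
  rw [pow_succ] at h
  linarith [h]

lemma appr_succ (x : ℤ_[p]) (k : ℕ) :
    x.appr (k + 1) = x.appr k + digit p x k * p ^ k := by
  obtain ⟨c, hc⟩ := x.dvd_appr_sub_appr k (k + 1) (by omega)
  have hmono := x.appr_mono (show k ≤ k + 1 by omega)
  have h1 : x.appr (k + 1) = x.appr k + p ^ k * c := by omega
  have h2 : digit p x k = c := by
    rw [digit, h1, Nat.add_mul_div_left _ _ (pow_pos (Fact.out : p.Prime).pos k),
      Nat.div_eq_of_lt (x.appr_lt k), zero_add]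
  rw [h2, h1, mul_comm]

lemma appr_eq_sum (x : ℤ_[p]) (n : ℕ) :
    x.appr n = ∑ k ∈ Finset.range n, digit p x k * p ^ k := by
  induction n with
  | zero => simp [PadicInt.appr]
  | succ n ih => rw [Finset.sum_range_succ, appr_succ, ih]

lemma summable_digit_series (d : ℕ → ℕ) :
    Summable (fun k => ((d k : ℤ_[p]) * (p : ℤ_[p]) ^ k)) := by
  have hp : 1 < p := (Fact.out : p.Prime).one_lt
  apply Summable.of_norm_bounded (g := fun k => ((p : ℝ)⁻¹) ^ k)
  · apply summable_geometric_of_lt_one (by positivity)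
    rw [inv_lt_one_iff₀]; right; exact_mod_cast hp
  · intro k
    calc ‖(d k : ℤ_[p]) * (p : ℤ_[p]) ^ k‖ = ‖(d k : ℤ_[p])‖ * ‖(p : ℤ_[p]) ^ k‖ := by
          rw [norm_mul]
      _ ≤ 1 * ((p : ℝ)⁻¹) ^ k := by
          apply mul_le_mul (PadicInt.norm_le_one _) _ (norm_nonneg _) zero_le_one
          rw [norm_pow, PadicInt.norm_p]
      _ = ((p : ℝ)⁻¹) ^ k := one_mul _

lemma appr_unique (x : ℤ_[p]) (n : ℕ) (a : ℕ) (ha : a < p ^ n)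
    (h : ((p : ℤ_[p])) ^ n ∣ x - a) : x.appr n = a := by
  have h2 : ((p : ℤ_[p])) ^ n ∣ x - x.appr n := by
    have := x.appr_spec n; rwa [Ideal.mem_span_singleton] at this
  have h3 : ((p : ℤ_[p])) ^ n ∣ (((a : ℤ) - (x.appr n : ℤ) : ℤ) : ℤ_[p]) := by
    have : (((a : ℤ) - (x.appr n : ℤ) : ℤ) : ℤ_[p]) = (x - x.appr n) - (x - a) := by
      push_cast; ring
    rw [this]; exact dvd_sub h2 h
  have h4 : ((p : ℤ) ^ n) ∣ ((a : ℤ) - (x.appr n : ℤ)) := by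
    rw [← PadicInt.norm_int_le_pow_iff_dvd]
    rw [PadicInt.norm_le_pow_iff_mem_span_pow, Ideal.mem_span_singleton]
    exact h3
  have h5 : (a : ℤ) - (x.appr n : ℤ) = 0 := by
    have := x.appr_lt n
    have habs : |(a : ℤ) - (x.appr n : ℤ)| < (p : ℤ) ^ n := by
      have hb : ((p : ℤ)) ^ n = ((p ^ n : ℕ) : ℤ) := by push_cast; ring
      rw [abs_lt, hb]; omega
    exact Int.eq_zero_of_abs_lt_dvd h4 habs
  omega

lemma sum_lt_pow (d : ℕ → ℕ) (hd : ∀ k, d k < p) (n : ℕ) :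
    ∑ k ∈ Finset.range n, d k * p ^ k < p ^ n := by
  induction n with
  | zero => simp
  | succ n ih =>
    rw [Finset.sum_range_succ, pow_succ]
    obtain ⟨q, rfl⟩ : ∃ q, p = q + 1 := ⟨p - 1, by have := (Fact.out : p.Prime).pos; omega⟩
    have h2 : d n * (q + 1) ^ n ≤ q * (q + 1) ^ n :=
      Nat.mul_le_mul_right _ (by have := hd n; omega)
    have key : (q + 1) ^ n + q * (q + 1) ^ n = (q + 1) ^ n * (q + 1) := by ring
    omega

lemma appr_tsum (d : ℕ → ℕ) (hd : ∀ k, d k < p) (n : ℕ) :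
    (∑' k, ((d k : ℤ_[p]) * (p : ℤ_[p]) ^ k)).appr n
      = ∑ k ∈ Finset.range n, d k * p ^ k := by
  apply appr_unique
  · exact sum_lt_pow p d hd n
  · have hs := summable_digit_series p d
    have hsplit := Summable.sum_add_tsum_nat_add n hs
    have hcast : ((∑ k ∈ Finset.range n, d k * p ^ k : ℕ) : ℤ_[p])
        = ∑ k ∈ Finset.range n, (d k : ℤ_[p]) * (p : ℤ_[p]) ^ k := by push_cast; ring
    rw [hcast, ← hsplit, add_sub_cancel_left]
    have : ∀ i : ℕ, ((d (i + n) : ℤ_[p]) * (p : ℤ_[p]) ^ (i + n))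
        = ((d (i + n) : ℤ_[p]) * (p : ℤ_[p]) ^ i) * (p : ℤ_[p]) ^ n := by
      intro i; rw [pow_add]; ring
    rw [tsum_congr this, (summable_digit_series p (fun i => d (i + n))).tsum_mul_right]
    exact Dvd.intro_left _ rfl

lemma digit_tsum (d : ℕ → ℕ) (hd : ∀ k, d k < p) (k : ℕ) :
    digit p (∑' k, ((d k : ℤ_[p]) * (p : ℤ_[p]) ^ k)) k = d k := by
  rw [digit, appr_tsum p d hd, Finset.sum_range_succ,
    Nat.add_mul_div_right _ _ (pow_pos (Fact.out : p.Prime).pos k),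
    Nat.div_eq_of_lt (sum_lt_pow p d hd k), zero_add]

lemma ext_digits (x y : ℤ_[p]) (h : ∀ k, digit p x k = digit p y k) : x = y := by
  have happr : ∀ n, x.appr n = y.appr n := by
    intro n; rw [appr_eq_sum, appr_eq_sum]
    exact Finset.sum_congr rfl fun k _ => by rw [h k]
  have hnorm : ∀ n : ℕ, ‖x - y‖ ≤ ((p : ℝ)⁻¹) ^ n := by
    intro n
    have h1 : x - y = (x - x.appr n) - (y - y.appr n) := by rw [happr n]; ring
    have hx : ‖x - (x.appr n : ℤ_[p])‖ ≤ ((p : ℝ)⁻¹) ^ n := by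
      have := (PadicInt.norm_le_pow_iff_mem_span_pow (x - (x.appr n : ℤ_[p])) n).mpr (x.appr_spec n)
      rwa [zpow_neg, zpow_natCast, ← inv_pow] at this
    have hy : ‖y - (y.appr n : ℤ_[p])‖ ≤ ((p : ℝ)⁻¹) ^ n := by
      have := (PadicInt.norm_le_pow_iff_mem_span_pow (y - (y.appr n : ℤ_[p])) n).mpr (y.appr_spec n)
      rwa [zpow_neg, zpow_natCast, ← inv_pow] at this
    have h1' : x - y = (x - (x.appr n : ℤ_[p])) + (-(y - (y.appr n : ℤ_[p]))) := by
      rw [happr n] at h1 ⊢; rw [h1]; ring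
    rw [h1']
    refine le_trans (PadicInt.nonarchimedean _ _) (max_le hx ?_)
    rwa [norm_neg]
  have hlim : Filter.Tendsto (fun n : ℕ => ((p : ℝ)⁻¹) ^ n) Filter.atTop (nhds 0) := by
    apply tendsto_pow_atTop_nhds_zero_of_lt_one (by positivity)
    rw [inv_lt_one_iff₀]; right; exact_mod_cast (Fact.out : p.Prime).one_lt
  have : ‖x - y‖ ≤ 0 := ge_of_tendsto' hlim fun n => hnorm n
  have := le_antisymm this (norm_nonneg _)
  rwa [norm_eq_zero, sub_eq_zero] at this

lemma digit_pXOR (x y : ℤ_[p]) (k : ℕ) :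
    digit p (pXOR p x y) k = (digit p x k + digit p y k) % p :=
  digit_tsum p _ (fun _ => Nat.mod_lt _ (Fact.out : p.Prime).pos) k

lemma exists_digits (v : ℕ → ℕ) (hv : ∀ k, v k < p) :
    ∃ x : ℤ_[p], ∀ k, digit p x k = v k :=
  ⟨∑' k, ((v k : ℤ_[p]) * (p : ℤ_[p]) ^ k), digit_tsum p v hv⟩

theorem stmt_9 (f : ℤ_[p] → ℤ_[p])
    (hlip : ∀ x y : ℤ_[p], ‖f x - f y‖ ≤ ‖x - y‖)
    (φ : (k : ℕ) → (Fin (k + 1) → ZMod p) → ZMod p)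
    (hφ : ∀ (x : ℤ_[p]) (k : ℕ),
      ((digit p (f x) k : ZMod p)) = φ k (fun i => (digit p x i : ZMod p))) :
    (∀ x y : ℤ_[p], f (pXOR p x y) = pXOR p (f x) (f y)) ↔
      ∀ k : ℕ, ∃ α : Fin (k + 1) → ZMod p,
        ∀ v : Fin (k + 1) → ZMod p, φ k v = ∑ i, α i * v i := by
  haveI : NeZero p := ⟨(Fact.out : p.Prime).ne_zero⟩
  constructor
  · intro H k
    -- Step 1: additivity of φ k
    have hadd : ∀ u w : Fin (k + 1) → ZMod p, φ k (u + w) = φ k u + φ k w := by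
      intro u w
      obtain ⟨x, hx⟩ := exists_digits p
        (fun i => if h : i < k + 1 then (u ⟨i, h⟩).val else 0)
        (fun i => by
          split
          · exact ZMod.val_lt _
          · exact (Fact.out : p.Prime).pos)
      obtain ⟨y, hy⟩ := exists_digits p
        (fun i => if h : i < k + 1 then (w ⟨i, h⟩).val else 0)
        (fun i => by
          split
          · exact ZMod.val_lt _
          · exact (Fact.out : p.Prime).pos)
      have hux : (fun i : Fin (k + 1) => ((digit p x i : ZMod p))) = u := by
        funext i
        rw [hx i, dif_pos i.isLt]
        simp [ZMod.natCast_val, ZMod.cast_id]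
      have hwy : (fun i : Fin (k + 1) => ((digit p y i : ZMod p))) = w := by
        funext i
        rw [hy i, dif_pos i.isLt]
        simp [ZMod.natCast_val, ZMod.cast_id]
      have h1 := hφ (pXOR p x y) k
      have h2 : (fun i : Fin (k + 1) => ((digit p (pXOR p x y) i : ZMod p))) = u + w := by
        funext i
        rw [digit_pXOR, ZMod.natCast_mod, Nat.cast_add]
        have := congrFun hux i
        have := congrFun hwy i
        simp only [Pi.add_apply]
        rw [congrFun hux i, congrFun hwy i]
      rw [h2, H x y] at h1
      have h3 : ((digit p (pXOR p (f x) (f y)) k : ZMod p)) = φ k u + φ k w := by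
        rw [digit_pXOR, ZMod.natCast_mod, Nat.cast_add, hφ x k, hφ y k, hux, hwy]
      rw [h3] at h1
      exact h1.symm
    -- Step 2: additive implies linear
    have h0 : φ k 0 = 0 := by
      have h := hadd 0 0
      rw [add_zero] at h
      exact (right_eq_add.mp h)
    let F : ((Fin (k + 1) → ZMod p)) →+ ZMod p := AddMonoidHom.mk' (φ k) hadd
    have hsmul : ∀ (c : ZMod p) (w : Fin (k + 1) → ZMod p), F (c • w) = c * F w := by
      intro c w
      have h1 : c • w = (c.val : ℕ) • w := by
        funext i
        simp [ZMod.natCast_val, ZMod.cast_id]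
      rw [h1, map_nsmul, nsmul_eq_mul, ZMod.natCast_val, ZMod.cast_id]
    refine ⟨fun i => φ k (Pi.single i 1 : Fin (k + 1) → ZMod p), fun v => ?_⟩
    have hv : v = ∑ i, v i • (Pi.single i 1 : Fin (k + 1) → ZMod p) := by
      funext j
      rw [Finset.sum_apply]
      simp [Pi.single_apply, Finset.sum_ite_eq', mul_comm]
    calc φ k v = F v := rfl
      _ = F (∑ i, v i • (Pi.single i 1 : Fin (k + 1) → ZMod p)) := by rw [← hv]
      _ = ∑ i, F (v i • (Pi.single i 1 : Fin (k + 1) → ZMod p)) := map_sum F _ _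
      _ = ∑ i, v i * F ((Pi.single i 1 : Fin (k + 1) → ZMod p)) := Finset.sum_congr rfl fun i _ => hsmul _ _
      _ = ∑ i, φ k (Pi.single i 1 : Fin (k + 1) → ZMod p) * v i := Finset.sum_congr rfl fun i _ => mul_comm _ _
  · intro h x y
    apply ext_digits
    intro k
    obtain ⟨α, hα⟩ := h k
    have hL : digit p (f (pXOR p x y)) k < p := digit_lt p _ k
    have hR : digit p (pXOR p (f x) (f y)) k < p := digit_lt p _ k
    have hcast : ((digit p (f (pXOR p x y)) k : ZMod p))
        = ((digit p (pXOR p (f x) (f y)) k : ZMod p)) := by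
      rw [hφ (pXOR p x y) k]
      have h2 : (fun i : Fin (k + 1) => ((digit p (pXOR p x y) i : ZMod p)))
          = (fun i : Fin (k + 1) => (digit p x i : ZMod p))
            + (fun i : Fin (k + 1) => (digit p y i : ZMod p)) := by
        funext i
        rw [digit_pXOR, ZMod.natCast_mod, Nat.cast_add]
        rfl
      rw [h2, hα]
      have h3 : ((digit p (pXOR p (f x) (f y)) k : ZMod p))
          = ((digit p (f x) k : ZMod p)) + ((digit p (f y) k : ZMod p)) := by
        rw [digit_pXOR, ZMod.natCast_mod, Nat.cast_add]
      rw [h3, hφ x k, hφ y k, hα, hα]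
      rw [← Finset.sum_add_distrib]
      exact Finset.sum_congr rfl fun i _ => by simp [Pi.add_apply]; ring
    have hval := congrArg ZMod.val hcast
    rwa [ZMod.val_cast_of_lt hL, ZMod.val_cast_of_lt hR] at hval
end

section
/- Let f : ℤ_p → ℤ_p be a 1-Lipschitz function with coordinate functions φ_k of the linear form φ_k(x_0,...,x_k) = α_0^{(k)} x_0 + ... + α_k^{(k)} x_k (mod p). Then f preserves the Haar measure on ℤ_p if and only if α_k^{(k)} ≢ 0 (mod p) for all k ≥ 0. -/
open MeasureTheory

variable (p : ℕ) [Fact p.Prime]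

namespace Stmt10Aux

variable {p}

lemma hp1 : 1 < p := (Fact.out : p.Prime).one_lt
lemma hppos : 0 < p := (Fact.out : p.Prime).pos

lemma digit_lt (x : ℤ_[p]) (k : ℕ) : digit p x k < p := by
  have h := x.appr_lt (k + 1)
  rw [pow_succ] at h
  exact Nat.div_lt_of_lt_mul h

lemma appr_succ (x : ℤ_[p]) (k : ℕ) :
    x.appr (k + 1) = x.appr k + p ^ k * digit p x k := by
  obtain ⟨c, hc⟩ := x.dvd_appr_sub_appr k (k + 1) (Nat.le_succ k)
  have hle : x.appr k ≤ x.appr (k + 1) := x.appr_mono (Nat.le_succ k)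
  have h1 : x.appr (k + 1) = x.appr k + p ^ k * c := by
    rw [← hc, Nat.add_sub_cancel' hle]
  have hd : digit p x k = c := by
    have hpk : 0 < p ^ k := pow_pos hppos k
    rw [digit, h1, Nat.add_mul_div_left _ _ hpk,
      Nat.div_eq_of_lt (x.appr_lt k), zero_add]
  rw [hd, h1]

lemma appr_eq_sum (x : ℤ_[p]) (n : ℕ) :
    x.appr n = ∑ k ∈ Finset.range n, p ^ k * digit p x k := by
  induction n with
  | zero => rfl
  | succ n ih => rw [Finset.sum_range_succ, ← ih, appr_succ]

lemma appr_mod (x : ℤ_[p]) {m n : ℕ} (h : m ≤ n) : x.appr n % p ^ m = x.appr m := by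
  obtain ⟨c, hc⟩ := x.dvd_appr_sub_appr m n h
  have hle : x.appr m ≤ x.appr n := x.appr_mono h
  have h1 : x.appr n = x.appr m + p ^ m * c := by
    rw [← hc, Nat.add_sub_cancel' hle]
  rw [h1, Nat.add_mul_mod_self_left, Nat.mod_eq_of_lt (x.appr_lt m)]

lemma digit_eq_of_appr_eq {x y : ℤ_[p]} {n : ℕ} (h : x.appr n = y.appr n)
    {k : ℕ} (hk : k < n) : digit p x k = digit p y k := by
  have hx := appr_mod x (m := k + 1) (n := n) hk
  have hy := appr_mod y (m := k + 1) (n := n) hk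
  rw [digit, digit, ← hx, ← hy, h]

lemma appr_eq_of_digit_eq {x y : ℤ_[p]} {n : ℕ}
    (h : ∀ k < n, digit p x k = digit p y k) : x.appr n = y.appr n := by
  rw [appr_eq_sum, appr_eq_sum]
  exact Finset.sum_congr rfl fun k hk => by
    rw [h k (Finset.mem_range.mp hk)]

lemma toZModPow_apply (n : ℕ) (x : ℤ_[p]) :
    PadicInt.toZModPow n x = (x.appr n : ZMod (p ^ n)) := rfl

instance nz (n : ℕ) : NeZero (p ^ n) := ⟨pow_ne_zero n (Nat.Prime.ne_zero Fact.out)⟩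

lemma toZModPow_eq_iff {x y : ℤ_[p]} (n : ℕ) :
    PadicInt.toZModPow n x = PadicInt.toZModPow n y ↔ x.appr n = y.appr n := by
  rw [toZModPow_apply, toZModPow_apply]
  constructor
  · intro h
    have := congrArg ZMod.val h
    rwa [ZMod.val_cast_of_lt (x.appr_lt n), ZMod.val_cast_of_lt (y.appr_lt n)] at this
  · intro h; rw [h]

lemma toZModPow_eq_iff_norm {x y : ℤ_[p]} (n : ℕ) :
    PadicInt.toZModPow n x = PadicInt.toZModPow n y ↔ ‖x - y‖ ≤ (p : ℝ) ^ (-(n : ℤ)) := by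
  rw [PadicInt.norm_le_pow_iff_mem_span_pow, ← PadicInt.ker_toZModPow,
    RingHom.mem_ker, map_sub, sub_eq_zero]

lemma digit_cast_eq_iff {a b : ℕ} (ha : a < p) (hb : b < p) :
    ((a : ZMod p) = (b : ZMod p)) ↔ a = b := by
  constructor
  · intro h
    haveI : NeZero p := ⟨(Nat.Prime.ne_zero Fact.out)⟩
    have := congrArg ZMod.val h
    rwa [ZMod.val_cast_of_lt ha, ZMod.val_cast_of_lt hb] at this
  · intro h; rw [h]

end Stmt10Aux

namespace Stmt10Aux

variable {p : ℕ} [Fact p.Prime]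

variable (p) in
def Bset (n : ℕ) (a : ZMod (p ^ n)) : Set ℤ_[p] := {x | PadicInt.toZModPow n x = a}

lemma mem_Bset {n : ℕ} {a : ZMod (p ^ n)} {x : ℤ_[p]} :
    x ∈ Bset p n a ↔ PadicInt.toZModPow n x = a := Iff.rfl

lemma toZModPow_natCast_val (n : ℕ) (a : ZMod (p ^ n)) :
    PadicInt.toZModPow n ((a.val : ℤ_[p])) = a := by
  rw [map_natCast]
  exact ZMod.natCast_rightInverse a

lemma Bset_eq_closedBall (n : ℕ) (a : ZMod (p ^ n)) :
    Bset p n a = Metric.closedBall ((a.val : ℤ_[p])) ((p : ℝ) ^ (-(n : ℤ))) := by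
  ext x
  rw [mem_Bset, Metric.mem_closedBall, dist_eq_norm,
    ← toZModPow_natCast_val n a, toZModPow_eq_iff_norm]
  rw [toZModPow_natCast_val]

lemma Bset_self (n : ℕ) (x : ℤ_[p]) : x ∈ Bset p n (PadicInt.toZModPow n x) := rfl

lemma measurableSet_Bset (n : ℕ) (a : ZMod (p ^ n)) : MeasurableSet (Bset p n a) := by
  rw [Bset_eq_closedBall]
  exact measurableSet_closedBall

instance : (haarZp p).IsAddLeftInvariant := by
  unfold haarZp; infer_instance

instance : IsFiniteMeasure (haarZp p) := by
  unfold haarZp; infer_instance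

lemma haarZp_univ : haarZp p Set.univ = 1 := by
  rw [haarZp, ← TopologicalSpace.PositiveCompacts.coe_top (α := ℤ_[p]),
    Measure.addHaarMeasure_self]

lemma haar_Bset_eq (n : ℕ) (a b : ZMod (p ^ n)) :
    haarZp p (Bset p n a) = haarZp p (Bset p n b) := by
  have key : Bset p n a = (fun x => (((b - a).val : ℤ_[p])) + x) ⁻¹' Bset p n b := by
    ext x
    simp only [Set.mem_preimage, mem_Bset, map_add, toZModPow_natCast_val]
    rw [add_comm, ← eq_sub_iff_add_eq, sub_sub_cancel]
  rw [key, measure_preimage_add]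

lemma haar_Bset (n : ℕ) (a : ZMod (p ^ n)) :
    haarZp p (Bset p n a) = ((p : ENNReal) ^ n)⁻¹ := by
  classical
  have hdisj : Set.PairwiseDisjoint (Finset.univ : Finset (ZMod (p ^ n)))
      (fun b => Bset p n b) := by
    intro b _ c _ hbc
    refine Set.disjoint_left.mpr fun x hxb hxc => hbc ?_
    rw [mem_Bset] at hxb hxc
    rw [← hxb, ← hxc]
  have hcover : (⋃ b ∈ (Finset.univ : Finset (ZMod (p ^ n))), Bset p n b) = Set.univ := by
    ext x
    simp only [Set.mem_iUnion, Set.mem_univ, iff_true, Finset.mem_coe]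
    exact ⟨_, Finset.mem_univ _, Bset_self n x⟩
  have hsum : ∑ b : ZMod (p ^ n), haarZp p (Bset p n b) = 1 := by
    rw [← measure_biUnion_finset hdisj (fun b _ => measurableSet_Bset n b), hcover, haarZp_univ]
  have hconst : ∀ b : ZMod (p ^ n), haarZp p (Bset p n b) = haarZp p (Bset p n a) :=
    fun b => haar_Bset_eq n b a
  rw [Finset.sum_congr rfl (fun b _ => hconst b), Finset.sum_const, Finset.card_univ,
    ZMod.card] at hsum
  have hne : ((p : ENNReal) ^ n) ≠ 0 := by
    simp [Nat.Prime.ne_zero (Fact.out : p.Prime)]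
  have hnt : ((p : ENNReal) ^ n) ≠ ⊤ := by
    simp [ENNReal.pow_ne_top]
  have : ((p : ENNReal) ^ n) * haarZp p (Bset p n a) = 1 := by
    rw [← hsum, nsmul_eq_mul]
    norm_cast
  calc haarZp p (Bset p n a)
      = ((p : ENNReal) ^ n)⁻¹ * (((p : ENNReal) ^ n) * haarZp p (Bset p n a)) := by
        rw [← mul_assoc, ENNReal.inv_mul_cancel hne hnt, one_mul]
    _ = ((p : ENNReal) ^ n)⁻¹ := by rw [this, mul_one]

variable (p) in
def Ssys : Set (Set ℤ_[p]) := {s | ∃ n a, s = Bset p n a}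

lemma Bset_subset {n m : ℕ} (h : n ≤ m) {a : ZMod (p ^ n)} {b : ZMod (p ^ m)}
    {x : ℤ_[p]} (hxa : x ∈ Bset p n a) (hxb : x ∈ Bset p m b) :
    Bset p m b ⊆ Bset p n a := by
  intro y hy
  rw [mem_Bset] at *
  rw [← PadicInt.cast_toZModPow n m h y, hy, ← hxb,
    PadicInt.cast_toZModPow n m h, hxa]

lemma isPiSystem_Ssys : IsPiSystem (Ssys p) := by
  rintro s ⟨n, a, rfl⟩ t ⟨m, b, rfl⟩ hne
  obtain ⟨x, hxa, hxb⟩ := hne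
  rcases le_total n m with h | h
  · have := Bset_subset h hxa hxb
    rw [Set.inter_eq_right.mpr this]
    exact ⟨m, b, rfl⟩
  · have := Bset_subset h hxb hxa
    rw [Set.inter_eq_left.mpr this]
    exact ⟨n, a, rfl⟩

lemma borel_eq_Ssys :
    (inferInstance : MeasurableSpace ℤ_[p]) = .generateFrom (Ssys p) := by
  have hinst : (inferInstance : MeasurableSpace ℤ_[p]) = borel ℤ_[p] := rfl
  rw [hinst]
  refine le_antisymm ?_ ?_
  · show MeasurableSpace.generateFrom {s : Set ℤ_[p] | IsOpen s} ≤ _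
    apply MeasurableSpace.generateFrom_le
    intro U hU
    have hU' : IsOpen U := hU
    have hcov : U = ⋃ (n : ℕ), ⋃ (a : ZMod (p ^ n)), ⋃ (_ : Bset p n a ⊆ U), Bset p n a := by
      ext x
      simp only [Set.mem_iUnion]
      constructor
      · intro hx
        obtain ⟨ε, hε, hball⟩ := Metric.isOpen_iff.mp hU' x hx
        obtain ⟨n, hn⟩ := PadicInt.exists_pow_neg_lt p hε
        refine ⟨n, PadicInt.toZModPow n x, ?_, Bset_self n x⟩
        intro y hy
        apply hball
        rw [mem_Bset] at hy
        rw [Metric.mem_ball, dist_eq_norm]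
        calc ‖y - x‖ ≤ (p : ℝ) ^ (-(n : ℤ)) := by
              rw [← toZModPow_eq_iff_norm]; exact hy
          _ < ε := hn
      · rintro ⟨n, a, hsub, hx⟩
        exact hsub hx
    rw [hcov]
    exact MeasurableSet.iUnion fun n => MeasurableSet.iUnion fun a =>
      MeasurableSet.iUnion fun _ => MeasurableSpace.measurableSet_generateFrom ⟨n, a, rfl⟩
  · apply MeasurableSpace.generateFrom_le
    rintro s ⟨n, a, rfl⟩
    exact measurableSet_Bset n a

end Stmt10Aux

namespace Stmt10Aux

variable {p : ℕ} [Fact p.Prime]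

lemma inj_appr {f : ℤ_[p] → ℤ_[p]} {α : (k : ℕ) → Fin (k + 1) → ZMod p}
    (hcoord : ∀ (x : ℤ_[p]) (k : ℕ),
      ((digit p (f x) k : ZMod p)) = ∑ i, α k i * (digit p x i : ZMod p))
    (hα : ∀ k, α k (Fin.last k) ≠ 0)
    {x y : ℤ_[p]} {n : ℕ} (h : (f x).appr n = (f y).appr n) :
    x.appr n = y.appr n := by
  apply appr_eq_of_digit_eq
  intro k
  induction k using Nat.strong_induction_on with
  | _ k ih =>
  intro hk
  have hf : (digit p (f x) k : ZMod p) = (digit p (f y) k : ZMod p) := by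
    rw [digit_eq_of_appr_eq h hk]
  rw [hcoord, hcoord, Fin.sum_univ_castSucc, Fin.sum_univ_castSucc] at hf
  have hlow : ∀ i ∈ (Finset.univ : Finset (Fin k)),
      α k i.castSucc * (digit p x i.castSucc : ZMod p)
        = α k i.castSucc * (digit p y i.castSucc : ZMod p) := by
    intro i _
    simp only [Fin.coe_castSucc]
    rw [ih i.val i.isLt (lt_trans i.isLt hk)]
  rw [Finset.sum_congr rfl hlow] at hf
  have hcancel := mul_left_cancel₀ (hα k) (add_left_cancel hf)
  have := (digit_cast_eq_iff (digit_lt x _) (digit_lt y _)).mp hcancel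
  simpa using this

lemma appr_f_eq_of_deg {f : ℤ_[p] → ℤ_[p]} {α : (k : ℕ) → Fin (k + 1) → ZMod p}
    (hcoord : ∀ (x : ℤ_[p]) (k : ℕ),
      ((digit p (f x) k : ZMod p)) = ∑ i, α k i * (digit p x i : ZMod p))
    {k : ℕ} (hαk : α k (Fin.last k) = 0)
    {x y : ℤ_[p]} (h : x.appr k = y.appr k) :
    (f x).appr (k + 1) = (f y).appr (k + 1) := by
  apply appr_eq_of_digit_eq
  intro j hj
  have hcast : (digit p (f x) j : ZMod p) = (digit p (f y) j : ZMod p) := by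
    rw [hcoord, hcoord]
    apply Finset.sum_congr rfl
    intro i _
    by_cases hik : (i : ℕ) < k
    · rw [digit_eq_of_appr_eq h hik]
    · have hjk : j = k := le_antisymm (Nat.lt_succ_iff.mp hj)
        (le_trans (le_of_not_gt hik) (Nat.lt_succ_iff.mp i.isLt))
      subst hjk
      have hi : i = Fin.last j := Fin.ext (by
        have := Nat.lt_succ_iff.mp i.isLt
        have := le_of_not_gt hik
        simp only [Fin.val_last]
        omega)
      rw [hi, hαk, zero_mul, zero_mul]
  exact (digit_cast_eq_iff (digit_lt _ _) (digit_lt _ _)).mp hcast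

end Stmt10Aux

open Stmt10Aux in
theorem stmt_10 (f : ℤ_[p] → ℤ_[p])
    (hlip : ∀ x y : ℤ_[p], ‖f x - f y‖ ≤ ‖x - y‖)
    (α : (k : ℕ) → Fin (k + 1) → ZMod p)
    (hcoord : ∀ (x : ℤ_[p]) (k : ℕ),
      ((digit p (f x) k : ZMod p)) = ∑ i, α k i * (digit p x i : ZMod p)) :
    MeasurePreserving f (haarZp p) (haarZp p) ↔ ∀ k : ℕ, α k (Fin.last k) ≠ 0 := by
  have hcont : Continuous f := by
    have : LipschitzWith 1 f := by
      apply LipschitzWith.of_dist_le_mul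
      intro x y
      simpa [dist_eq_norm] using hlip x y
    exact this.continuous
  have hmeas : Measurable f := hcont.measurable
  -- compatibility of `f` with reductions
  have hfc : ∀ (n : ℕ) (x y : ℤ_[p]), PadicInt.toZModPow n x = PadicInt.toZModPow n y →
      PadicInt.toZModPow n (f x) = PadicInt.toZModPow n (f y) := by
    intro n x y h
    rw [toZModPow_eq_iff_norm] at h ⊢
    exact le_trans (hlip x y) h
  have hpow_ne : ∀ n : ℕ, ((p : ENNReal) ^ n)⁻¹ ≠ 0 := fun n =>
    ENNReal.inv_ne_zero.mpr (by simp [ENNReal.pow_ne_top])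
  constructor
  · -- measure preserving → diagonal coefficients nonzero
    intro hmp k
    intro hαk
    set n := k + 1 with hn
    -- the reduction mod p^n of f factors through ZMod (p^k)
    set G : ZMod (p ^ k) → ZMod (p ^ n) :=
      fun b => PadicInt.toZModPow n (f ((b.val : ℤ_[p]))) with hG
    have hGspec : ∀ x : ℤ_[p], PadicInt.toZModPow n (f x) = G (PadicInt.toZModPow k x) := by
      intro x
      have h1 : ((PadicInt.toZModPow k x).val : ℤ_[p]).appr k = x.appr k := by
        rw [← toZModPow_eq_iff, toZModPow_natCast_val]
      have h2 := appr_f_eq_of_deg hcoord hαk h1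
      rw [hG]
      exact ((toZModPow_eq_iff n).mpr h2).symm
    -- G is not surjective
    have hnotsurj : ¬ Function.Surjective G := by
      intro hsurj
      have hcard := Fintype.card_le_of_surjective G hsurj
      rw [ZMod.card, ZMod.card] at hcard
      exact absurd hcard (not_le.mpr (Nat.pow_lt_pow_right hp1 (Nat.lt_succ_self k)))
    rw [Function.Surjective] at hnotsurj
    push_neg at hnotsurj
    obtain ⟨c, hc⟩ := hnotsurj
    have hempty : f ⁻¹' (Bset p n c) = ∅ := by
      ext x
      simp only [Set.mem_preimage, mem_Bset, Set.mem_empty_iff_false, iff_false]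
      rw [hGspec x]
      exact hc _
    have := hmp.map_eq
    have h0 : haarZp p (Bset p n c) = 0 := by
      rw [← this, Measure.map_apply hmeas (measurableSet_Bset n c), hempty, measure_empty]
    rw [haar_Bset] at h0
    exact hpow_ne n h0
  · -- diagonal coefficients nonzero → measure preserving
    intro hα
    refine ⟨hmeas, ?_⟩
    -- the induced maps on ZMod (p^n)
    have hFn : ∀ n : ℕ, ∃ F : ZMod (p ^ n) → ZMod (p ^ n),
        Function.Bijective F ∧ ∀ x : ℤ_[p], PadicInt.toZModPow n (f x) = F (PadicInt.toZModPow n x) := by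
      intro n
      refine ⟨fun a => PadicInt.toZModPow n (f ((a.val : ℤ_[p]))), ?_, ?_⟩
      · rw [Fintype.bijective_iff_injective_and_card]
        refine ⟨?_, rfl⟩
        intro a b hab
        rw [toZModPow_eq_iff] at hab
        have h2 := inj_appr hcoord hα hab
        rw [← toZModPow_natCast_val n a, ← toZModPow_natCast_val n b, toZModPow_eq_iff]
        exact h2
      · intro x
        apply hfc
        rw [toZModPow_natCast_val]
    apply ext_of_generate_finite (Ssys p) borel_eq_Ssys isPiSystem_Ssys
    · rintro s ⟨n, a, rfl⟩
      obtain ⟨F, hFbij, hFspec⟩ := hFn n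
      have hpre : f ⁻¹' (Bset p n a) = Bset p n ((Equiv.ofBijective F hFbij).symm a) := by
        ext x
        simp only [Set.mem_preimage, mem_Bset]
        rw [hFspec x]
        constructor
        · intro h
          apply hFbij.injective
          rw [h]
          exact (Equiv.ofBijective_apply_symm_apply F hFbij a).symm
        · intro h
          rw [h]
          exact Equiv.ofBijective_apply_symm_apply F hFbij a
      rw [Measure.map_apply hmeas (measurableSet_Bset n a), hpre, haar_Bset, haar_Bset]
    · rw [Measure.map_apply hmeas MeasurableSet.univ, Set.preimage_univ]
end
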